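/- Let (X, τ) be a topological vector space and suppose K(τ) = ⋂{f⁻¹(0) : f ∈ (X,τ)*} is complemented in X, with complement L. Let τ₁ be the product of the trivial (indiscrete) topology on K(τ) and the relative topology on L, and τ₂ the product of the relative topology on K(τ) and the trivial topology on L. Then τ₁ is nearly convex, τ₂ is trivial dual, and τ = sup(τ₁, τ₂). -/

import Mathlib

open Filter Topology

theorem klee_decomposition_of_complemented_kernel
    {X : Type*} [AddCommGroup X] [Module ℝ X]
    [t : TopologicalSpace X] [IsTopologicalAddGroup X] [ContinuousSMul ℝ X]
    -- P is a continuous linear projection onto K(τ) = ∩ ker f :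
    (P : X →L[ℝ] X)
    (hproj : ∀ x, P (P x) = P x)
    (hrange : Set.range P = {x : X | ∀ f : X →L[ℝ] ℝ, f x = 0}) :
    -- τ₁ : product of the trivial topology on K(τ) and the relative topology
    -- on the complement L = ker P, i.e. the topology induced by x ↦ x - P x;
    -- τ₂ : product of the relative topology on K(τ) and the trivial topology
    -- on L, i.e. the topology induced by P.
    let τ₁ : TopologicalSpace X := t.induced (fun x => x - P x)
    let τ₂ : TopologicalSpace X := t.induced (fun x => P x)
    -- τ₁ is nearly convex :
    (∀ x : X, x ∉ @closure X τ₁ {0} →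
      ∃ f : X →ₗ[ℝ] ℝ, @Continuous X ℝ τ₁ _ f ∧ f x ≠ 0) ∧
    -- τ₂ is trivial dual :
    (∀ f : X →ₗ[ℝ] ℝ, @Continuous X ℝ τ₂ _ f → f = 0) ∧
    -- τ₁ and τ₂ are weaker than τ, and τ = sup(τ₁, τ₂) :
    t ≤ τ₁ ∧ t ≤ τ₂ ∧
    (∀ U ∈ @nhds X t 0, ∃ V ∈ @nhds X τ₁ 0, ∃ W ∈ @nhds X τ₂ 0, V ∩ W ⊆ U) := by
  intro τ₁ τ₂
  letI t' : TopologicalSpace X := t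
  have hτ₁ : τ₁ = t.induced (fun x => x - P x) := rfl
  have hτ₂ : τ₂ = t.induced (fun x => P x) := rfl
  have hQcont : Continuous (fun x : X => x - P x) := continuous_id.sub P.continuous
  have ht1 : t ≤ τ₁ := continuous_iff_le_induced.mp hQcont
  have ht2 : t ≤ τ₂ := continuous_iff_le_induced.mp P.continuous
  refine ⟨?_, ?_, ht1, ht2, ?_⟩
  · -- nearly convex
    intro x hx
    have hQx : x - P x ≠ 0 := by
      intro h
      apply hx
      rw [hτ₁, closure_induced]
      have himg : (fun y : X => y - P y) '' {0} = {0} := by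
        simp
      rw [himg, h]
      exact subset_closure (Set.mem_singleton _)
    have hnotmem : x - P x ∉ Set.range P := by
      rintro ⟨y, hy⟩
      apply hQx
      have h1 : P (x - P x) = x - P x := by rw [← hy, hproj]
      rw [← h1]
      simp [hproj]
    rw [hrange] at hnotmem
    simp only [Set.mem_setOf_eq, not_forall] at hnotmem
    obtain ⟨g, hg⟩ := hnotmem
    refine ⟨g.toLinearMap.comp (LinearMap.id - P.toLinearMap), ?_, ?_⟩
    · have hQ1 : @Continuous X X τ₁ t (fun y => y - P y) := by
        rw [hτ₁]; exact continuous_induced_dom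
      show @Continuous X ℝ τ₁ _ fun y => g (y - P y)
      exact @Continuous.comp X X ℝ τ₁ t _ _ _ g.continuous hQ1
    · simpa using hg
  · -- trivial dual
    intro f hf
    -- f vanishes on ker P
    have hker : ∀ y : X, P y = 0 → f y = 0 := by
      intro y hy
      have hyc : y ∈ @closure X τ₂ ({0} : Set X) := by
        rw [hτ₂, closure_induced]
        have himg : (fun z : X => P z) '' {0} = {0} := by simp
        rw [himg, hy]
        exact subset_closure (Set.mem_singleton _)
      have hfy : f y ∈ closure ({0} : Set ℝ) := by
        refine @map_mem_closure X ℝ τ₂ _ f ({0} : Set X) y ({0} : Set ℝ) hf hyc ?_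
        intro z hz
        simp only [Set.mem_singleton_iff] at hz
        simp [hz]
      simpa using hfy
    have hfP : ∀ y : X, f y = f (P y) := by
      intro y
      have h0 : f (y - P y) = 0 := hker _ (by simp [hproj])
      have h2 : f y - f (P y) = 0 := by rw [← map_sub]; exact h0
      linarith
    have hPcont : @Continuous X X t τ₂ (fun y => P y) := by
      rw [hτ₂, continuous_iff_le_induced, induced_compose]
      have hPP : ((fun x : X => P x) ∘ fun y : X => P y) = fun x : X => P x := by
        funext x; exact hproj x
      rw [hPP]
      exact ht2
    have hfc : @Continuous X ℝ t _ fun y : X => f (P y) :=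
      @Continuous.comp X X ℝ t τ₂ _ _ _ hf hPcont
    have hfc' : @Continuous X ℝ t _ (f : X → ℝ) := by
      have he : (fun y : X => f (P y)) = f := by funext y; rw [← hfP]
      rwa [he] at hfc
    ext y
    have hPy : P y ∈ Set.range P := ⟨y, rfl⟩
    rw [hrange] at hPy
    have h4 : f (P y) = 0 := hPy ⟨f, hfc'⟩
    simp [hfP y, h4]
  · -- sup
    intro U hU
    obtain ⟨V₀, hV₀, hadd⟩ := exists_nhds_zero_half hU
    refine ⟨(fun y : X => y - P y) ⁻¹' V₀, ?_, (fun y : X => P y) ⁻¹' V₀, ?_, ?_⟩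
    · rw [hτ₁, mem_nhds_induced]
      exact ⟨V₀, by simpa using hV₀, subset_rfl⟩
    · rw [hτ₂, mem_nhds_induced]
      exact ⟨V₀, by simpa using hV₀, subset_rfl⟩
    · rintro z ⟨hz1, hz2⟩
      have hz := hadd _ hz1 _ hz2
      simpa using hz
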